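/- arXiv:0908.1946 — 3 statements merged into one kernel-verified Lean document; each statement's English description precedes it below -/
import Mathlib

section
/- Let G be a star graph on n vertices with e edges, and let I(G) be its edge ideal in k[x_1,...,x_n]. Then the dimension over k of the degree-3 component of I(G) equals ne + e/2 - e²/2, i.e., 2·dim_k I(G)_3 = 2ne + e - e². -/
open Finset MvPolynomial
open scoped Classical

private lemma aux_two_mul_card {n : ℕ} (S : Finset (Fin n)) :
    2 * ((S ×ˢ S).filter (fun p => p.1 ≤ p.2)).card = S.card * S.card + S.card := by
  classical
  set A := (S ×ˢ S).filter (fun p => p.1 ≤ p.2) with hA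
  set B := (S ×ˢ S).filter (fun p => p.2 ≤ p.1) with hB
  have hBA : B = A.image Prod.swap := by
    ext p
    simp only [hA, hB, Finset.mem_image, Finset.mem_filter, Finset.mem_product]
    constructor
    · rintro ⟨⟨h1, h2⟩, h3⟩
      exact ⟨(p.2, p.1), ⟨⟨h2, h1⟩, h3⟩, rfl⟩
    · rintro ⟨q, ⟨⟨h1, h2⟩, h3⟩, rfl⟩
      exact ⟨⟨h2, h1⟩, h3⟩
  have hcard : B.card = A.card := by
    rw [hBA]
    exact Finset.card_image_of_injective _ Prod.swap_injective
  have hunion : A ∪ B = S ×ˢ S := by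
    ext p
    simp only [Finset.mem_union, hA, hB, Finset.mem_filter, Finset.mem_product]
    constructor
    · rintro (⟨h, _⟩ | ⟨h, _⟩) <;> exact h
    · intro h
      rcases le_total p.1 p.2 with h' | h'
      · exact Or.inl ⟨h, h'⟩
      · exact Or.inr ⟨h, h'⟩
  have hinter : A ∩ B = S.image (fun a => (a, a)) := by
    ext p
    simp only [Finset.mem_inter, hA, hB, Finset.mem_filter, Finset.mem_product,
      Finset.mem_image]
    constructor
    · rintro ⟨⟨⟨h1, h2⟩, h3⟩, ⟨_, h4⟩⟩
      exact ⟨p.1, h1, Prod.ext rfl (le_antisymm h3 h4)⟩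
    · rintro ⟨a, ha, rfl⟩
      exact ⟨⟨⟨ha, ha⟩, le_refl _⟩, ⟨⟨ha, ha⟩, le_refl _⟩⟩
  have hintercard : (A ∩ B).card = S.card := by
    rw [hinter]
    exact Finset.card_image_of_injective _ (fun a b h => (Prod.mk.injEq _ _ _ _ ▸ h : _ ∧ _).1)
  have h := Finset.card_union_add_card_inter A B
  rw [hunion, hintercard, hcard, Finset.card_product] at h
  omega

private lemma aux_pair_eq {α : Type*} [LinearOrder α] {a b c d : α} (hab : a ≤ b) (hcd : c ≤ d)
    (h : ({a, b} : Multiset α) = {c, d}) : a = c ∧ b = d := by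
  have hac : a = c ∨ a = d := by
    have : a ∈ ({c, d} : Multiset α) := h ▸ Multiset.mem_cons_self a {b}
    simpa using this
  have hca : c = a ∨ c = b := by
    have : c ∈ ({a, b} : Multiset α) := h.symm ▸ Multiset.mem_cons_self c {d}
    simpa using this
  have h1 : a = c := by
    rcases hac with h' | h'
    · exact h'
    · rcases hca with h'' | h''
      · exact h''.symm
      · have hac' : a ≤ c := by rw [h'']; exact hab
        have hca' : c ≤ a := by rw [h']; exact hcd
        exact le_antisymm hac' hca'
  subst h1
  have h2 := (Multiset.cons_inj_right a).mp h
  exact ⟨rfl, Multiset.singleton_inj.mp h2⟩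

/-- For a star graph `G` on `n` vertices with `e` edges, the degree-3 component of its
edge ideal satisfies `2·dim_k I(G)₃ = 2ne + e - e²`. -/
theorem star_edge_ideal_degree_three_dimension (k : Type*) [Field k] (n : ℕ)
    (G : SimpleGraph (Fin n)) [DecidableRel G.Adj] (v : Fin n)
    (hstar : ∀ a b : Fin n, G.Adj a b → a = v ∨ b = v)
    (e : ℕ) (he : e = G.edgeFinset.card)
    (I : Ideal (MvPolynomial (Fin n) k))
    (hI : I = Ideal.span {m | ∃ i j, G.Adj i j ∧ m = X i * X j}) :
    (2 : ℤ) * (Module.finrank k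
        ↥(Submodule.restrictScalars k I ⊓ homogeneousSubmodule (Fin n) k 3) : ℤ)
      = 2 * n * e + e - e ^ 2 := by
  classical
  set N := G.neighborFinset v with hN
  have hvN : v ∉ N := by simp [hN]
  have hadjN : ∀ i, i ∈ N → G.Adj v i := fun i hi => (G.mem_neighborFinset v i).mp hi
  -- Step A : e = N.card
  have himg : G.edgeFinset = N.image (fun i => s(v, i)) := by
    ext E
    constructor
    · intro hE
      have hE' := (SimpleGraph.mem_edgeFinset).mp hE
      induction E using Sym2.ind with
      | _ a b =>
        have hadj : G.Adj a b := hE'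
        rcases hstar a b hadj with rfl | rfl
        · exact Finset.mem_image.mpr ⟨b, (G.mem_neighborFinset a b).mpr hadj, rfl⟩
        · refine Finset.mem_image.mpr ⟨a, (G.mem_neighborFinset b a).mpr hadj.symm, ?_⟩
          exact (Sym2.eq_swap).symm
    · intro hE
      rcases Finset.mem_image.mp hE with ⟨i, hi, rfl⟩
      exact SimpleGraph.mem_edgeFinset.mpr (G.mem_edgeSet.mpr (hadjN i hi))
  have heN : e = N.card := by
    rw [he, himg, Finset.card_image_of_injective _ (fun i j h => Sym2.congr_right.mp h)]
  -- Step B : generators as monomials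
  set Eset : Set (Fin n →₀ ℕ) :=
    {s | ∃ i ∈ N, s = Finsupp.single v 1 + Finsupp.single i 1} with hEset
  have hXX : ∀ a b : Fin n, (X a * X b : MvPolynomial (Fin n) k)
      = monomial (Finsupp.single a 1 + Finsupp.single b 1) 1 := by
    intro a b
    rw [show (X a : MvPolynomial (Fin n) k) = monomial (Finsupp.single a 1) 1 from rfl,
      show (X b : MvPolynomial (Fin n) k) = monomial (Finsupp.single b 1) 1 from rfl,
      monomial_mul, one_mul]
  have hgen : {m : MvPolynomial (Fin n) k | ∃ i j, G.Adj i j ∧ m = X i * X j}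
      = (fun s => monomial s (1 : k)) '' Eset := by
    ext m
    simp only [Set.mem_setOf_eq, Set.mem_image, hEset]
    constructor
    · rintro ⟨i, j, hadj, rfl⟩
      rcases hstar i j hadj with rfl | rfl
      · exact ⟨Finsupp.single i 1 + Finsupp.single j 1,
          ⟨j, (G.mem_neighborFinset i j).mpr hadj, rfl⟩, (hXX i j).symm⟩
      · refine ⟨Finsupp.single j 1 + Finsupp.single i 1,
          ⟨i, (G.mem_neighborFinset j i).mpr hadj.symm, rfl⟩, ?_⟩
        rw [hXX i j, add_comm]
    · rintro ⟨s, ⟨i, hi, rfl⟩, rfl⟩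
      exact ⟨v, i, hadjN i hi, (hXX v i).symm⟩
  -- Step C : the finset of exponents
  set P : Finset (Fin n × Fin n) :=
    (Finset.univ ×ˢ Finset.univ).filter (fun p => p.1 ≤ p.2 ∧ (p.1 ∈ N ∨ p.2 ∈ N)) with hP
  set f : Fin n × Fin n → (Fin n →₀ ℕ) :=
    fun p => Finsupp.single v 1 + Finsupp.single p.1 1 + Finsupp.single p.2 1 with hf
  set D := P.image f with hD
  have hfm : ∀ p : Fin n × Fin n,
      Finsupp.toMultiset (f p) = ({v, p.1, p.2} : Multiset (Fin n)) := by
    intro p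
    show Finsupp.toMultiset (Finsupp.single v 1 + Finsupp.single p.1 1 + Finsupp.single p.2 1) = _
    rw [Finsupp.toMultiset_add, Finsupp.toMultiset_add, Finsupp.toMultiset_single,
      Finsupp.toMultiset_single, Finsupp.toMultiset_single, one_smul, one_smul, one_smul]
    rfl
  have hdegm : ∀ d : Fin n →₀ ℕ, d.degree = Multiset.card d.toMultiset := by
    intro d
    rw [Finsupp.card_toMultiset]
    rfl
  have hfdeg : ∀ p : Fin n × Fin n, (f p).degree = 3 := by
    intro p
    rw [hdegm, hfm]
    rfl
  -- Step D : the graded piece is the span of these monomials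
  set MDset : Set (MvPolynomial (Fin n) k) := (fun d => (monomial d (1 : k))) '' ↑D with hMDset
  have hSspan : Submodule.restrictScalars k I ⊓ homogeneousSubmodule (Fin n) k 3
      = Submodule.span k MDset := by
    apply le_antisymm
    · intro p hp
      obtain ⟨hpI, hph⟩ := Submodule.mem_inf.mp hp
      have hpI2 : p ∈ I := hpI
      rw [hI, hgen] at hpI2
      have hpI' := mem_ideal_span_monomial_image.mp hpI2
      have hph' : MvPolynomial.IsHomogeneous p 3 := hph
      rw [← support_sum_monomial_coeff p]
      apply Submodule.sum_mem
      intro d hd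
      have hdeg3 : d.degree = 3 := by
        rw [Finsupp.degree_eq_weight_one]
        exact hph' (MvPolynomial.mem_support_iff.mp hd)
      obtain ⟨s, hsE, hsle⟩ := hpI' d hd
      obtain ⟨i, hiN, rfl⟩ := hsE
      have hadj : G.Adj v i := hadjN i hiN
      have hvi : v ≠ i := hadj.ne
      have hvd : 1 ≤ d v := by
        have := hsle v
        rwa [Finsupp.add_apply, Finsupp.single_eq_same,
          Finsupp.single_eq_of_ne' hvi.symm, add_zero] at this
      have hid : 1 ≤ d i := by
        have := hsle i
        rwa [Finsupp.add_apply, Finsupp.single_eq_of_ne' hvi,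
          Finsupp.single_eq_same, zero_add] at this
      -- d ∈ D
      have hdD : d ∈ D := by
        set M := d.toMultiset with hM
        have hMc : Multiset.card M = 3 := by rw [hM, ← hdegm d, hdeg3]
        have hvM : v ∈ M := by
          rw [hM, Finsupp.mem_toMultiset, Finsupp.mem_support_iff]
          omega
        have hiM : i ∈ M := by
          rw [hM, Finsupp.mem_toMultiset, Finsupp.mem_support_iff]
          omega
        obtain ⟨M', hM'⟩ := Multiset.exists_cons_of_mem hvM
        have hM'c : Multiset.card M' = 2 := by
          rw [hM'] at hMc
          simpa using hMc
        obtain ⟨x, y, hxy⟩ := Multiset.card_eq_two.mp hM'c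
        have hiM' : i = x ∨ i = y := by
          have hiM'' : i ∈ M' := by
            rw [hM'] at hiM
            rcases Multiset.mem_cons.mp hiM with h | h
            · exact absurd h.symm hvi
            · exact h
          rw [hxy] at hiM''
          simpa using hiM''
        have key : ∀ x y : Fin n, x ≤ y → (x ∈ N ∨ y ∈ N) →
            M = v ::ₘ x ::ₘ {y} → d ∈ D := by
          intro a b hab habN hMeq
          refine Finset.mem_image.mpr ⟨(a, b), ?_, ?_⟩
          · rw [hP]
            simp only [Finset.mem_filter, Finset.mem_product, Finset.mem_univ, true_and]
            exact ⟨hab, habN⟩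
          · have ht : Finsupp.toMultiset (f (a, b)) = Finsupp.toMultiset d := by
              rw [hfm, ← hM, hMeq]
              rfl
            have h2 := congrArg Multiset.toFinsupp ht
            rwa [Finsupp.toMultiset_toFinsupp, Finsupp.toMultiset_toFinsupp] at h2
        rcases le_total x y with hle | hle
        · refine key x y hle ?_ (by rw [hM', hxy, Multiset.insert_eq_cons])
          rcases hiM' with rfl | rfl
          · exact Or.inl hiN
          · exact Or.inr hiN
        · refine key y x hle ?_ (by rw [hM', hxy, Multiset.pair_comm x y, Multiset.insert_eq_cons])
          rcases hiM' with rfl | rfl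
          · exact Or.inr hiN
          · exact Or.inl hiN
      have hmono : monomial d (coeff d p) = (coeff d p) • monomial d (1 : k) := by
        rw [smul_monomial, smul_eq_mul, mul_one]
      rw [hmono]
      exact Submodule.smul_mem _ _ (Submodule.subset_span ⟨d, hdD, rfl⟩)
    · rw [Submodule.span_le]
      rintro m ⟨d, hdD, rfl⟩
      obtain ⟨p, hpP, rfl⟩ := Finset.mem_image.mp hdD
      have hpP' : p.1 ≤ p.2 ∧ (p.1 ∈ N ∨ p.2 ∈ N) := by
        rw [hP] at hpP
        simpa using hpP
      refine Submodule.mem_inf.mpr ⟨?_, ?_⟩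
      · show monomial (f p) (1 : k) ∈ I
        rw [hI]
        rcases hpP'.2 with h | h
        · have : monomial (f p) (1 : k) = (X v * X p.1) * X p.2 := by
            rw [hXX v p.1,
              show (X p.2 : MvPolynomial (Fin n) k) = monomial (Finsupp.single p.2 1) 1 from rfl,
              monomial_mul, one_mul]
          rw [this]
          exact Ideal.mul_mem_right _ _
            (Ideal.subset_span ⟨v, p.1, hadjN p.1 h, rfl⟩)
        · have : monomial (f p) (1 : k) = (X v * X p.2) * X p.1 := by
            rw [hXX v p.2,
              show (X p.1 : MvPolynomial (Fin n) k) = monomial (Finsupp.single p.1 1) 1 from rfl,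
              monomial_mul, one_mul, hf]
            congr 1
            abel
          rw [this]
          exact Ideal.mul_mem_right _ _
            (Ideal.subset_span ⟨v, p.2, hadjN p.2 h, rfl⟩)
      · exact (mem_homogeneousSubmodule 3 _).mpr (isHomogeneous_monomial _ (hfdeg p))
  -- Step E : dimension count
  have hinjP : Set.InjOn f ↑P := by
    intro p hp q hq hfeq
    have hple : p.1 ≤ p.2 := by
      rw [hP] at hp
      simp only [Finset.coe_filter, Set.mem_setOf_eq] at hp
      exact hp.2.1
    have hqle : q.1 ≤ q.2 := by
      rw [hP] at hq
      simp only [Finset.coe_filter, Set.mem_setOf_eq] at hq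
      exact hq.2.1
    have h1 := congrArg Finsupp.toMultiset hfeq
    rw [hfm, hfm] at h1
    have h2 : ({p.1, p.2} : Multiset (Fin n)) = {q.1, q.2} :=
      (Multiset.cons_inj_right v).mp h1
    obtain ⟨hh1, hh2⟩ := aux_pair_eq hple hqle h2
    exact Prod.ext hh1 hh2
  have hDcard : D.card = P.card := by
    rw [hD]
    exact Finset.card_image_of_injOn hinjP
  have hli : LinearIndependent k (fun d : ↥(D : Finset (Fin n →₀ ℕ)) =>
      (monomial (d : Fin n →₀ ℕ) (1 : k) : MvPolynomial (Fin n) k)) := by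
    have hb := (MvPolynomial.basisMonomials (Fin n) k).linearIndependent
    have := hb.comp (fun d : ↥(D : Finset (Fin n →₀ ℕ)) => (d : Fin n →₀ ℕ))
      Subtype.val_injective
    rw [coe_basisMonomials] at this
    exact this
  have hrank : Module.finrank k
      ↥(Submodule.restrictScalars k I ⊓ homogeneousSubmodule (Fin n) k 3) = P.card := by
    rw [hSspan]
    have hset : MDset = Set.range (fun d : ↥(D : Finset (Fin n →₀ ℕ)) =>
        (monomial (d : Fin n →₀ ℕ) (1 : k) : MvPolynomial (Fin n) k)) := by
      rw [hMDset]
      exact Set.image_eq_range _ _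
    rw [hset, finrank_span_eq_card hli, Fintype.card_coe, hDcard]
  -- Step F : counting
  have heLe : e ≤ n := by
    rw [heN]
    calc N.card ≤ (Finset.univ : Finset (Fin n)).card := Finset.card_le_card (Finset.subset_univ N)
    _ = n := by simp
  set A := (Finset.univ ×ˢ Finset.univ : Finset ((Fin n) × (Fin n))).filter
    (fun p => p.1 ≤ p.2) with hA
  set Q := ((Finset.univ \ N) ×ˢ (Finset.univ \ N)).filter
    (fun p : Fin n × Fin n => p.1 ≤ p.2) with hQ
  have hPA : P = A.filter (fun p => p.1 ∈ N ∨ p.2 ∈ N) := by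
    rw [hP, hA, Finset.filter_filter]
  have hQA : Q = A.filter (fun p => ¬(p.1 ∈ N ∨ p.2 ∈ N)) := by
    rw [hQ, hA]
    ext p
    simp only [Finset.mem_filter, Finset.mem_product, Finset.mem_sdiff, Finset.mem_univ,
      true_and]
    constructor
    · rintro ⟨⟨h1, h2⟩, h3⟩
      exact ⟨h3, by tauto⟩
    · rintro ⟨h3, h4⟩
      exact ⟨⟨by tauto, by tauto⟩, h3⟩
  have hsplit : P.card + Q.card = A.card := by
    rw [hPA, hQA]
    exact Finset.card_filter_add_card_filter_not _
  have hAcard : 2 * A.card = n * n + n := by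
    have := aux_two_mul_card (Finset.univ : Finset (Fin n))
    simpa [hA] using this
  have hQcard : 2 * Q.card = (n - e) * (n - e) + (n - e) := by
    have := aux_two_mul_card (Finset.univ \ N)
    have hc : (Finset.univ \ N).card = n - e := by
      rw [Finset.card_sdiff_of_subset (Finset.subset_univ N), ← heN]
      simp
    rw [hc] at this
    exact this
  obtain ⟨m, hmn⟩ : ∃ m, n = m + e := ⟨n - e, (Nat.sub_add_cancel heLe).symm⟩
  have hme : n - e = m := by omega
  rw [hme] at hQcard
  have h1 : 2 * P.card + 2 * Q.card = 2 * A.card := by omega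
  have hx : n * n + n = m * m + m + (2 * (m * e) + e * e + e) := by rw [hmn]; ring
  have hy : 2 * n * e + e = 2 * (m * e) + 2 * (e * e) + e := by rw [hmn]; ring
  have hNat : 2 * P.card + e * e = 2 * n * e + e := by linarith
  rw [hrank]
  have hNatZ : (2 : ℤ) * P.card + e * e = 2 * n * e + e := by exact_mod_cast hNat
  linear_combination hNatZ
end

section
/- For any nonnegative integer a with d-th Macaulay representation a = C(b_d,d) + ... + C(b_1,1), the Kruskal–Katona pseudo-power a^{(d)} = C(b_d, d+1) + ... + C(b_1, 2) satisfies: iterating a ↦ a^{(d)} with increasing d starting from any a eventually reaches 0; that is, defining s_1 = a and s_{i+1} = s_i^{(i+1)}, there exists k with s_i = 0 for all i > k. -/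
/-- `b` is the `d`-th Macaulay representation of `a`:
`a = ∑_{i=1}^{d} C(b_i, i)` with `b_d > ⋯ > b_1 ≥ 0`. -/
def IsMacaulayRep (d a : ℕ) (b : Fin d → ℕ) : Prop :=
  StrictMono b ∧ a = ∑ i : Fin d, (b i).choose ((i : ℕ) + 1)

/-- `c` is the `d`-th Kruskal–Katona pseudo-power `a^{(d)}` of `a`. -/
def IsKKPow (d a c : ℕ) : Prop :=
  ∃ b : Fin d → ℕ, IsMacaulayRep d a b ∧ c = ∑ i : Fin d, (b i).choose ((i : ℕ) + 2)

lemma aux_choose_lt_choose_succ {n k : ℕ} (h : k + 1 ≤ n) :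
    n.choose (k + 1) < (n + 1).choose (k + 1) := by
  rw [Nat.choose_succ_succ']
  have : 0 < n.choose k := Nat.choose_pos (by omega)
  omega

lemma aux_gap {n : ℕ} {b : Fin n → ℕ} (hb : StrictMono b) :
    ∀ m : ℕ, ∀ j k : Fin n, (k : ℕ) = (j : ℕ) + m → b j + m ≤ b k := by
  intro m
  induction m with
  | zero =>
      intro j k h
      have : j = k := Fin.ext (by omega)
      simp [this]
  | succ m ih =>
      intro j k h
      have hk : (k : ℕ) < n := k.isLt
      have hlt : (j : ℕ) + m < n := by omega
      have h1 := ih j ⟨(j : ℕ) + m, hlt⟩ rfl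
      have h2 : b ⟨(j : ℕ) + m, hlt⟩ < b k := hb (by rw [Fin.lt_def]; simp; omega)
      omega

lemma aux_lemD (d : ℕ) (b : Fin (d + 1) → ℕ) (hb : StrictMono b) :
    (∑ j : Fin (d + 1), (b j).choose ((j : ℕ) + 2)) < (b (Fin.last d) + 1).choose (d + 2) ∨
    (∑ j : Fin (d + 1), (b j).choose ((j : ℕ) + 2)) = 0 := by
  induction d with
  | zero =>
      have hl : (Fin.last 0 : Fin 1) = 0 := rfl
      rw [Fin.sum_univ_one, hl]
      have hv : ((0 : Fin 1) : ℕ) + 2 = 2 := rfl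
      have hv2 : (0 : ℕ) + 2 = 2 := rfl
      rw [hv, hv2]
      rcases Nat.eq_zero_or_pos (b 0) with h | h
      · right
        simp [h]
      · left
        have hps : (b 0 + 1).choose 2 = (b 0).choose 1 + (b 0).choose 2 :=
          Nat.choose_succ_succ' _ 1
        have h1 : (b 0).choose 1 = b 0 := Nat.choose_one_right _
        omega
  | succ d ih =>
      have hmono : StrictMono (fun j : Fin (d + 1) => b j.castSucc) :=
        hb.comp Fin.strictMono_castSucc
      have hsum : (∑ j : Fin (d + 2), (b j).choose ((j : ℕ) + 2)) =
          (∑ j : Fin (d + 1), (b j.castSucc).choose ((j : ℕ) + 2)) +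
            (b (Fin.last (d + 1))).choose (d + 3) := by
        rw [Fin.sum_univ_castSucc]
        simp
      have htop : b ((Fin.last d).castSucc) < b (Fin.last (d + 1)) :=
        hb (by rw [Fin.lt_def]; simp)
      have harith : d + 1 + 2 = d + 3 := by omega
      rw [harith, hsum]
      rcases ih (fun j => b j.castSucc) hmono with hlt | hzero
      · left
        have h2 : (b ((Fin.last d).castSucc) + 1).choose (d + 2) ≤
            (b (Fin.last (d + 1))).choose (d + 2) :=
          Nat.choose_le_choose _ (by omega)
        have hps : (b (Fin.last (d + 1)) + 1).choose (d + 3) =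
            (b (Fin.last (d + 1))).choose (d + 2) +
              (b (Fin.last (d + 1))).choose (d + 3) :=
          Nat.choose_succ_succ' _ (d + 2)
        omega
      · rcases lt_or_ge (b (Fin.last (d + 1))) (d + 3) with hc | hc
        · right
          rw [hzero, Nat.choose_eq_zero_of_lt hc]
        · left
          have hlt2 := aux_choose_lt_choose_succ (n := b (Fin.last (d + 1))) (k := d + 2) hc
          rw [show d + 2 + 1 = d + 3 from rfl] at hlt2
          omega

/-- Iterating the Kruskal–Katona pseudo-power with increasing degree eventually
reaches 0: if `s 1 = a` and `s (i+1) = (s i)^{(i+1)}` for all `i ≥ 1`, then there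
is a `k` with `s i = 0` for all `i > k`. -/
theorem kk_pseudo_power_iteration_vanishes (a : ℕ) (s : ℕ → ℕ) (h1 : s 1 = a)
    (hstep : ∀ i : ℕ, 1 ≤ i → IsKKPow (i + 1) (s i) (s (i + 1))) :
    ∃ k : ℕ, ∀ i : ℕ, k < i → s i = 0 := by
  classical
  have H : ∀ i : ℕ, 1 ≤ i → ∃ b : Fin (i + 1) → ℕ, StrictMono b ∧
      s i = ∑ j : Fin (i + 1), (b j).choose ((j : ℕ) + 1) ∧
      s (i + 1) = ∑ j : Fin (i + 1), (b j).choose ((j : ℕ) + 2) := by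
    intro i hi
    obtain ⟨b, ⟨hb1, hb2⟩, hb3⟩ := hstep i hi
    exact ⟨b, hb1, hb2, hb3⟩
  set B : ∀ i : ℕ, Fin (i + 1) → ℕ := fun i =>
    if h : 1 ≤ i then (H i h).choose else fun _ => 0 with hB
  have hBspec : ∀ i : ℕ, ∀ _ : 1 ≤ i, StrictMono (B i) ∧
      s i = ∑ j : Fin (i + 1), (B i j).choose ((j : ℕ) + 1) ∧
      s (i + 1) = ∑ j : Fin (i + 1), (B i j).choose ((j : ℕ) + 2) := by
    intro i h
    simp only [hB, dif_pos h]
    exact (H i h).choose_spec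
  set t : ℕ → ℕ := fun i => B i (Fin.last i) with ht
  have claim1 : ∀ i, 1 ≤ i → t (i + 1) ≤ max (t i) (i + 1) := by
    intro i hi
    obtain ⟨hmono, _, hnext⟩ := hBspec i hi
    obtain ⟨_, hrep', _⟩ := hBspec (i + 1) (by omega)
    have hlow : (t (i + 1)).choose (i + 2) ≤ s (i + 1) := by
      rw [hrep']
      have := Finset.single_le_sum
        (f := fun j : Fin (i + 2) => (B (i + 1) j).choose ((j : ℕ) + 1))
        (fun j _ => Nat.zero_le _) (Finset.mem_univ (Fin.last (i + 1)))
      simpa [ht] using this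
    rcases aux_lemD i (B i) hmono with hlt | hzero
    · rw [← hnext] at hlt
      by_contra hcon
      push_neg at hcon
      have h1 : t i + 1 ≤ t (i + 1) := by omega
      have h2 : (t i + 1).choose (i + 2) ≤ (t (i + 1)).choose (i + 2) :=
        Nat.choose_le_choose _ h1
      simp only [ht] at hlt h2 hlow h1
      omega
    · rw [← hnext] at hzero
      have hz : (t (i + 1)).choose (i + 2) = 0 := by omega
      have := Nat.choose_eq_zero_iff.mp hz
      omega
  have claim2 : ∀ i, 1 ≤ i → t i ≤ max (t 1) i := by
    intro i
    induction i with
    | zero => omega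
    | succ n ih =>
        intro _
        rcases Nat.eq_zero_or_pos n with h | h
        · subst h; simp
        · have hc := claim1 n h
          have hn := ih h
          omega
  refine ⟨t 1, fun i hi => ?_⟩
  have hi1 : 1 ≤ i := by omega
  obtain ⟨hmono, hrep, _⟩ := hBspec i hi1
  have hti : t i ≤ i := by have := claim2 i hi1; omega
  rw [hrep]
  apply Finset.sum_eq_zero
  intro j _
  apply Nat.choose_eq_zero_of_lt
  have hj : (j : ℕ) ≤ i := by omega
  have hg := aux_gap hmono (i - (j : ℕ)) j (Fin.last i) (by simp; omega)
  simp only [ht] at hti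
  omega
end

section
/- Let G be a simple graph on n vertices with e edges, and suppose for some vertex v of degree d ≥ 1 that (d-1)(e-d) + |E(G \ N(v))| = 0. If additionally every vertex of G has degree 0, 1, or e, and e ≥ 2, then G has a vertex of degree e. -/
open Finset
open scoped Classical

/-- If `G` has `e ≥ 2` edges, every vertex has degree `0`, `1` or `e`, and for some
vertex `v` of degree `d ≥ 1` one has `(d-1)(e-d) + |E(G \ N(v))| = 0`, then `G` has
a vertex of degree `e`. -/
theorem exists_degree_e_vertex {V : Type*} [Fintype V] [DecidableEq V]
    (G : SimpleGraph V) [DecidableRel G.Adj] (e : ℕ) (he : e = G.edgeFinset.card)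
    (v : V) (d : ℕ) (hd : d = G.degree v) (hd1 : 1 ≤ d)
    (hzero : (d - 1) * (e - d)
        + (G.edgeFinset.filter (fun ed => ∀ x ∈ ed, x ≠ v ∧ ¬ G.Adj v x)).card = 0)
    (hdeg : ∀ u : V, G.degree u = 0 ∨ G.degree u = 1 ∨ G.degree u = e)
    (he2 : 2 ≤ e) :
    ∃ u : V, G.degree u = e := by
  have hdv : d ≤ e := by
    have hsub : G.incidenceFinset v ⊆ G.edgeFinset := by
      intro x hx
      rw [SimpleGraph.mem_incidenceFinset] at hx
      exact SimpleGraph.mem_edgeFinset.2 hx.1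
    have := Finset.card_le_card hsub
    rw [SimpleGraph.card_incidenceFinset_eq_degree] at this
    omega
  obtain ⟨h1, h2⟩ := Nat.add_eq_zero.mp hzero
  rcases Nat.mul_eq_zero.mp h1 with h | h
  · -- d = 1
    have hd' : d = 1 := by omega
    have hdeg1 : G.degree v = 1 := by omega
    obtain ⟨w, hw⟩ : ∃ w, G.Adj v w := by
      rw [← SimpleGraph.degree_pos_iff_exists_adj]; omega
    rcases hdeg w with h0 | h1' | he'
    · have := (G.degree_pos_iff_exists_adj w).2 ⟨v, hw.symm⟩
      omega
    · -- deg w = 1 : contradiction with e ≥ 2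
      exfalso
      have honly : ∀ x, G.Adj v x → x = w := by
        intro x hx
        have hxn : x ∈ G.neighborFinset v := by simpa using hx
        have hwn : w ∈ G.neighborFinset v := by simpa using hw
        have hc : (G.neighborFinset v).card = 1 := by
          rwa [SimpleGraph.card_neighborFinset_eq_degree]
        obtain ⟨a, ha⟩ := Finset.card_eq_one.mp hc
        rw [ha, Finset.mem_singleton] at hxn hwn
        rw [hxn, hwn]
      have honlyw : ∀ x, G.Adj w x → x = v := by
        intro x hx
        have hxn : x ∈ G.neighborFinset w := by simpa using hx
        have hvn : v ∈ G.neighborFinset w := by simpa using hw.symm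
        have hc : (G.neighborFinset w).card = 1 := by
          rwa [SimpleGraph.card_neighborFinset_eq_degree]
        obtain ⟨a, ha⟩ := Finset.card_eq_one.mp hc
        rw [ha, Finset.mem_singleton] at hxn hvn
        rw [hxn, hvn]
      have hsub : G.edgeFinset ⊆ {s(v, w)} := by
        intro ed hed
        have hne : ¬ (∀ x ∈ ed, x ≠ v ∧ ¬ G.Adj v x) := by
          intro hall
          have : ed ∈ G.edgeFinset.filter (fun ed => ∀ x ∈ ed, x ≠ v ∧ ¬ G.Adj v x) :=
            Finset.mem_filter.2 ⟨hed, hall⟩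
          rw [Finset.card_eq_zero.mp h2] at this
          exact absurd this (Finset.notMem_empty _)
        push_neg at hne
        obtain ⟨x, hx, hx'⟩ := hne
        induction ed with
        | _ a b =>
          have hab : G.Adj a b := SimpleGraph.mem_edgeFinset.mp hed
          simp only [Sym2.mem_iff] at hx
          rw [Finset.mem_singleton]
          -- x = v or Adj v x; in latter case x = w
          rcases hx with rfl | rfl
          · by_cases hxv : x = v
            · subst hxv
              have : b = w := honly b hab
              rw [this]
            · have hadj : G.Adj v x := by tauto
              have hxw : x = w := honly x hadj
              subst hxw
              have : b = v := honlyw b hab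
              rw [this, Sym2.eq_swap]
          · by_cases hxv : x = v
            · subst hxv
              have : a = w := honly a hab.symm
              rw [this, Sym2.eq_swap]
            · have hadj : G.Adj v x := by tauto
              have hxw : x = w := honly x hadj
              subst hxw
              have : a = v := honlyw a hab.symm
              rw [this]
      have := Finset.card_le_card hsub
      rw [Finset.card_singleton] at this
      omega
    · exact ⟨w, he'⟩
  · -- e ≤ d, so d = e
    exact ⟨v, by omega⟩
end
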